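/- Assume in addition that 2^n − 1 is nonzero in K (i.e. the characteristic of K does not divide 2^n − 1). Then the K-linear span of the set of nonzero idempotents {c_k : k ∈ ℤ/(2^n − 1)ℤ} of •_τ is all of Fin n → K. -/

import Mathlib

/-- If `2^n − 1 ≠ 0` in `K`, the nonzero idempotents `c_k` of the cyclic-shift isotope span
`Fin n → K` over `K`. -/
theorem stmt_15 {K : Type*} [Field K] (n : ℕ) [NeZero n] (hn : 2 ≤ n)
    (hchar : ((2 ^ n - 1 : ℕ) : K) ≠ 0)
    (ζ : K) (hζ : IsPrimitiveRoot ζ (2 ^ n - 1))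
    (c : ZMod (2 ^ n - 1) → Fin n → K)
    (hc : ∀ k (i : Fin n), c k i = ζ ^ ((2 ^ (n - 1 - (i : ℕ)) * k : ZMod (2 ^ n - 1)).val)) :
    Submodule.span K (Set.range c) = ⊤ := by
  have h2n : 1 < 2 ^ n := Nat.one_lt_two_pow (by omega)
  have hNpos : 0 < 2 ^ n - 1 := by omega
  haveI : NeZero (2 ^ n - 1) := ⟨hNpos.ne'⟩
  have hζN : ζ ^ (2 ^ n - 1) = 1 := hζ.pow_eq_one
  have hpowmod : ∀ x : ℕ, ζ ^ (x % (2 ^ n - 1)) = ζ ^ x := by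
    intro x
    conv_rhs => rw [← Nat.mod_add_div x (2 ^ n - 1), pow_add, pow_mul, hζN, one_pow, mul_one]
  have e_add : ∀ a b : ZMod (2 ^ n - 1), ζ ^ ((a + b).val) = ζ ^ a.val * ζ ^ b.val := by
    intro a b
    rw [ZMod.val_add, hpowmod, pow_add]
  have e_mul : ∀ a b : ZMod (2 ^ n - 1), ζ ^ ((a * b).val) = (ζ ^ a.val) ^ b.val := by
    intro a b
    rw [ZMod.val_mul, hpowmod, pow_mul]
  -- convert a sum over ZMod (2 ^ n - 1) to a sum over range (2 ^ n - 1)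
  have hsum : ∀ x : K, ∑ k : ZMod (2 ^ n - 1), x ^ (ZMod.val k) = ∑ r ∈ Finset.range (2 ^ n - 1), x ^ r := by
    intro x
    refine Finset.sum_nbij' (fun k => ZMod.val k) (fun r => (r : ZMod (2 ^ n - 1))) ?_ ?_ ?_ ?_ ?_
    · intro k _; exact Finset.mem_range.mpr (ZMod.val_lt k)
    · intro r _; exact Finset.mem_univ _
    · intro k _; exact ZMod.natCast_rightInverse k
    · intro r hr; exact ZMod.val_natCast_of_lt (Finset.mem_range.mp hr)
    · intro k _; rfl
  -- values of the powers of 2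
  have hpowlt : ∀ i : Fin n, 2 ^ (n - 1 - (i : ℕ)) < (2 ^ n - 1) := by
    intro i
    have h1 : 2 ^ (n - 1 - (i:ℕ)) ≤ 2 ^ (n - 1) := Nat.pow_le_pow_right (by norm_num) (by omega)
    have h2 : 2 ^ n = 2 * 2 ^ (n - 1) := by
      conv_lhs => rw [show n = (n-1) + 1 by omega]
      ring
    have h3 : 2 ≤ 2 ^ (n - 1) := by
      calc 2 = 2 ^ 1 := rfl
      _ ≤ 2 ^ (n-1) := Nat.pow_le_pow_right (by norm_num) (by omega)
    omega
  have hval : ∀ i : Fin n, ((2 : ZMod (2 ^ n - 1)) ^ (n - 1 - (i : ℕ))).val = 2 ^ (n - 1 - (i : ℕ)) := by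
    intro i
    have h1 : ((2 : ZMod (2 ^ n - 1)) ^ (n - 1 - (i:ℕ))) = ((2 ^ (n - 1 - (i:ℕ)) : ℕ) : ZMod (2 ^ n - 1)) := by
      push_cast; ring
    rw [h1, ZMod.val_natCast, Nat.mod_eq_of_lt (hpowlt i)]
  set m : Fin n → ZMod (2 ^ n - 1) := fun i => (2 : ZMod (2 ^ n - 1)) ^ (n - 1 - (i : ℕ)) with hm
  have hminj : Function.Injective m := by
    intro i j hij
    have : (m i).val = (m j).val := by rw [hij]
    rw [hm] at this
    simp only [hval] at this
    have := Nat.pow_right_injective (le_refl 2) this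
    have hi := i.isLt; have hj := j.isLt
    ext; omega
  -- key: each standard basis vector is in the span
  have hsingle : ∀ j : Fin n, Pi.single j (1 : K) ∈ Submodule.span K (Set.range c) := by
    intro j
    have key : Pi.single j (1 : K)
        = ((2 ^ n - 1) : K)⁻¹ • ∑ k : ZMod (2 ^ n - 1), ζ ^ ((-(m j) * k).val) • c k := by
      funext i
      simp only [Pi.smul_apply, Finset.sum_apply, smul_eq_mul, hc]
      have hterm : ∀ k : ZMod (2 ^ n - 1),
          ζ ^ ((-(m j) * k).val) * ζ ^ ((2 ^ (n - 1 - (i:ℕ)) * k : ZMod (2 ^ n - 1)).val)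
          = (ζ ^ ((m i - m j).val)) ^ k.val := by
        intro k
        have h1 : (2 ^ (n - 1 - (i:ℕ)) * k : ZMod (2 ^ n - 1)) = m i * k := by rw [hm]
        rw [h1, ← e_add]
        have h2 : -(m j) * k + m i * k = (m i - m j) * k := by ring
        rw [h2, e_mul]
      rw [Finset.sum_congr rfl (fun k _ => hterm k), hsum]
      by_cases hij : i = j
      · subst hij
        simp only [sub_self, ZMod.val_zero, pow_zero, one_pow]
        simp only [Finset.sum_const, Finset.card_range, nsmul_eq_mul, mul_one]
        rw [Pi.single_eq_same]
        have hcharK : (2 : K) ^ n - 1 ≠ 0 := by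
          have h := hchar
          rw [Nat.cast_sub (by omega), Nat.cast_pow, Nat.cast_ofNat, Nat.cast_one] at h
          exact h
        field_simp
        rw [Nat.cast_sub (by omega : 1 ≤ 2 ^ n), Nat.cast_pow, Nat.cast_ofNat, Nat.cast_one]
      · have hne : m i - m j ≠ 0 := sub_ne_zero.mpr (fun h => hij (hminj h))
        have hvpos : 0 < (m i - m j).val := by
          rcases Nat.eq_zero_or_pos (m i - m j).val with h | h
          · exact absurd ((ZMod.val_eq_zero _).mp h) hne
          · exact h
        have hvlt : (m i - m j).val < (2 ^ n - 1) := ZMod.val_lt _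
        have hx1 : ζ ^ ((m i - m j).val) ≠ 1 := hζ.pow_ne_one_of_pos_of_lt hvpos.ne' hvlt
        have hxN : (ζ ^ ((m i - m j).val)) ^ (2 ^ n - 1) = 1 := by
          rw [← pow_mul, mul_comm, pow_mul, hζN, one_pow]
        rw [geom_sum_eq hx1, hxN]
        simp [Pi.single_eq_of_ne hij]
    rw [key]
    refine Submodule.smul_mem _ _ (Submodule.sum_mem _ fun k _ => ?_)
    exact Submodule.smul_mem _ _ (Submodule.subset_span ⟨k, rfl⟩)
  rw [eq_top_iff, ← (Pi.basisFun K (Fin n)).span_eq, Submodule.span_le]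
  rintro _ ⟨j, rfl⟩
  simpa [Pi.basisFun_apply] using hsingle j
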